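/- Let N, M be natural numbers, let s : Fin N → Fin M be a labeling (assigning to each of N spectra its spiking pattern among M observed patterns), and let n be a natural number with n + 1 ≤ N. Then cov(n) · (N − n) ≤ cov(n+1) · (n + 1); equivalently, the probability that a uniformly random j-element subset of the N spectra observes all patterns is nondecreasing in j, i.e., cov(n)/C(N,n) ≤ cov(n+1)/C(N,n+1). -/

import Mathlib

attribute [local instance] Classical.propDecidable

/-- `cov N M s j`: the number of `j`-element subsets `T` of `Fin N` that observe all
`M` patterns under the labeling `s`, i.e. for every `m : Fin M` some `i ∈ T` has
`s i = m`. -/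
noncomputable def cov (N M : ℕ) (s : Fin N → Fin M) (j : ℕ) : ℕ :=
  (((Finset.univ : Finset (Fin N)).powersetCard j).filter
    (fun T => ∀ m : Fin M, ∃ i ∈ T, s i = m)).card

lemma cov_mul_le (N M : ℕ) (s : Fin N → Fin M) (n : ℕ) :
    cov N M s n * (N - n) ≤ cov N M s (n + 1) * (n + 1) := by
  classical
  unfold cov
  refine Finset.card_mul_le_card_mul (fun T T' => T ⊆ T') ?_ ?_
  · intro T hT
    simp only [Finset.mem_filter, Finset.mem_powersetCard] at hT
    obtain ⟨⟨-, hcard⟩, hcov⟩ := hT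
    have hc : Tᶜ.card = N - n := by
      simp [Finset.card_compl, hcard]
    rw [← hc]
    apply Finset.card_le_card_of_injOn (fun x => insert x T)
    · intro x hx
      have hxT : x ∉ T := Finset.mem_compl.mp hx
      simp only [Finset.mem_coe, Finset.bipartiteAbove, Finset.mem_filter, Finset.mem_powersetCard]
      refine ⟨⟨⟨Finset.subset_univ _, ?_⟩, ?_⟩, Finset.subset_insert _ _⟩
      · rw [Finset.card_insert_of_notMem hxT, hcard]
      · intro m
        obtain ⟨i, hi, hsi⟩ := hcov m
        exact ⟨i, Finset.mem_insert_of_mem hi, hsi⟩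
    · intro x hx y hy hxy
      have hxT : x ∉ T := Finset.mem_compl.mp hx
      have hxy' : insert x T = insert y T := hxy
      have := Finset.mem_insert_self x T
      rw [hxy'] at this
      rcases Finset.mem_insert.mp this with h | h
      · exact h
      · exact absurd h hxT
  · intro T' hT'
    simp only [Finset.mem_filter, Finset.mem_powersetCard] at hT'
    have hsub : (Finset.bipartiteBelow (fun T T' => T ⊆ T')
        (((Finset.univ : Finset (Fin N)).powersetCard n).filter
          (fun T => ∀ m : Fin M, ∃ i ∈ T, s i = m)) T') ⊆ T'.powersetCard n := by
      intro T hT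
      simp only [Finset.bipartiteBelow, Finset.mem_filter, Finset.mem_powersetCard] at hT ⊢
      exact ⟨hT.2, hT.1.1.2⟩
    calc _ ≤ (T'.powersetCard n).card := Finset.card_le_card hsub
    _ = (n+1).choose n := by rw [Finset.card_powersetCard, hT'.1.2]
    _ = n + 1 := Nat.choose_succ_self_right n

/-- Monotonicity underlying the dominant ratio (Section 3.3):
`cov(n) · (N - n) ≤ cov(n+1) · (n+1)`, equivalently the probability that a uniformly
random selection of spectra observes all spiking patterns is nondecreasing in the
number of selected spectra: `cov(n)/C(N,n) ≤ cov(n+1)/C(N,n+1)`. -/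
theorem cov_ratio_monotone (N M : ℕ) (s : Fin N → Fin M) (n : ℕ) (hn : n + 1 ≤ N) :
    cov N M s n * (N - n) ≤ cov N M s (n + 1) * (n + 1) ∧
      (cov N M s n : ℝ) / (N.choose n : ℝ) ≤
        (cov N M s (n + 1) : ℝ) / (N.choose (n + 1) : ℝ) := by
  have h1 := cov_mul_le N M s n
  refine ⟨h1, ?_⟩
  have hp1 : 0 < N.choose n := Nat.choose_pos (le_trans (Nat.le_succ n) hn)
  have hp2 : 0 < N.choose (n+1) := Nat.choose_pos hn
  rw [div_le_div_iff₀ (by exact_mod_cast hp1) (by exact_mod_cast hp2)]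
  have key : cov N M s n * N.choose (n+1) ≤ cov N M s (n+1) * N.choose n := by
    have hid : N.choose (n+1) * (n+1) = N.choose n * (N - n) := Nat.choose_succ_right_eq N n
    have : cov N M s n * N.choose (n+1) * (n+1) ≤ cov N M s (n+1) * N.choose n * (n+1) := by
      calc cov N M s n * N.choose (n+1) * (n+1)
          = cov N M s n * (N - n) * N.choose n := by rw [mul_assoc, hid]; ring
        _ ≤ cov N M s (n+1) * (n+1) * N.choose n := Nat.mul_le_mul_right _ h1
        _ = cov N M s (n+1) * N.choose n * (n+1) := by ring
    exact Nat.le_of_mul_le_mul_right this (Nat.succ_pos n)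
  exact_mod_cast key
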